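/- Consider a directed graph on the node set {1,…,N} with edge set E; for each node i let 𝐕ᵢ = {j : (j,i) ∈ E} denote the in-neighbours and qᵢ = #{j : (i,j) ∈ E} the out-degree of i. Let V₁,…,V_N : ℝ → ℝ be differentiable with Vᵢ(t) ≥ 0 for all t ≥ 0, let g₁,…,g_N : [0,∞) → ℝ satisfy gᵢ(t) ≥ 0 for all t ≥ 0, and let α₁,…,α_N > 0, π₁,…,π_N > 0 satisfy qᵢπᵢ < 2αᵢ for every i. Suppose that for every i and every t ≥ 0, Vᵢ′(t) + 2αᵢVᵢ(t) + gᵢ(t) ≤ Σ_{j∈𝐕ᵢ} πⱼVⱼ(t) (the disturbance-free vector dissipation inequality). Then, with ρ = min_{1≤i≤N}(2αᵢ − qᵢπᵢ) > 0, the sum V(t) = Σ_{i=1}^N Vᵢ(t) decays exponentially: V(t) ≤ V(0)·e^{−ρt} for all t ≥ 0. -/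

import Mathlib

open Finset

/-- The in-neighbourhood `𝐕ᵢ = {j : (j,i) ∈ E}` of node `i` in a digraph with edge set `E`. -/
def inNbrs {N : ℕ} (E : Finset (Fin N × Fin N)) (i : Fin N) : Finset (Fin N) :=
  Finset.univ.filter (fun j => (j, i) ∈ E)

/-- The out-degree `qᵢ = #{j : (i,j) ∈ E}` of node `i` in a digraph with edge set `E`. -/
def outDeg {N : ℕ} (E : Finset (Fin N × Fin N)) (i : Fin N) : ℕ :=
  (Finset.univ.filter (fun j => (i, j) ∈ E)).card

theorem stmt_8 {N : ℕ} (hN : 0 < N) (E : Finset (Fin N × Fin N))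
    (V g : Fin N → ℝ → ℝ) (α π : Fin N → ℝ)
    (hVdiff : ∀ i, Differentiable ℝ (V i))
    (hVnonneg : ∀ i t, 0 ≤ t → 0 ≤ V i t)
    (hg : ∀ i, ∀ t : ℝ, 0 ≤ t → 0 ≤ g i t)
    (hα : ∀ i, 0 < α i) (hπ : ∀ i, 0 < π i)
    (hqπ : ∀ i, (outDeg E i : ℝ) * π i < 2 * α i)
    (hdiss : ∀ i, ∀ t : ℝ, 0 ≤ t → deriv (V i) t + 2 * α i * V i t + g i t ≤
        ∑ j ∈ inNbrs E i, π j * V j t)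
    (ρ : ℝ)
    (hρ : ρ = Finset.univ.inf' ⟨⟨0, hN⟩, Finset.mem_univ _⟩
        (fun i => 2 * α i - (outDeg E i : ℝ) * π i)) :
    (0 < ρ) ∧
      ∀ t : ℝ, 0 ≤ t → (∑ i, V i t) ≤ (∑ i, V i 0) * Real.exp (-ρ * t) := by
  have hkey : ∀ i : Fin N, ρ ≤ 2 * α i - (outDeg E i : ℝ) * π i := by
    intro i; rw [hρ]; exact Finset.inf'_le _ (Finset.mem_univ i)
  have hρpos : 0 < ρ := by
    rw [hρ]; refine (Finset.lt_inf'_iff _).2 ?_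
    intro i _
    linarith [hqπ i]
  refine ⟨hρpos, ?_⟩
  -- double sum swap
  have hswap : ∀ t : ℝ, (∑ i, ∑ j ∈ inNbrs E i, π j * V j t)
      = ∑ j, (outDeg E j : ℝ) * (π j * V j t) := by
    intro t
    simp only [inNbrs, Finset.sum_filter]
    rw [Finset.sum_comm]
    refine Finset.sum_congr rfl fun j _ => ?_
    rw [← Finset.sum_filter, Finset.sum_const, nsmul_eq_mul, outDeg]
  -- differential inequality for the sum
  have hdW : ∀ t : ℝ, 0 ≤ t → (∑ i, deriv (V i) t) + ρ * (∑ i, V i t) ≤ 0 := by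
    intro t ht
    have h1 : (∑ i, (deriv (V i) t + 2 * α i * V i t + g i t))
        ≤ ∑ i, ∑ j ∈ inNbrs E i, π j * V j t :=
      Finset.sum_le_sum fun i _ => hdiss i t ht
    rw [hswap t] at h1
    have h2 : ∀ i : Fin N, (outDeg E i : ℝ) * (π i * V i t) - 2 * α i * V i t
        ≤ -ρ * V i t := by
      intro i
      have := hkey i
      have hv := hVnonneg i t ht
      nlinarith
    have h3 : (∑ i, ((outDeg E i : ℝ) * (π i * V i t) - 2 * α i * V i t))
        ≤ ∑ i, -ρ * V i t := Finset.sum_le_sum fun i _ => h2 i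
    have hg' : 0 ≤ ∑ i, g i t := Finset.sum_nonneg fun i _ => hg i t ht
    simp only [Finset.sum_add_distrib, Finset.sum_sub_distrib,
      ← Finset.mul_sum] at h1 h3 ⊢
    linarith
  intro t ht
  set W : ℝ → ℝ := fun s => ∑ i, V i s with hWdef
  have hW : ∀ s : ℝ, HasDerivAt W (∑ i, deriv (V i) s) s := fun s =>
    HasDerivAt.fun_sum (u := Finset.univ) fun i _ => (hVdiff i s).hasDerivAt
  set F : ℝ → ℝ := fun s => W s * Real.exp (ρ * s) with hFdef
  have hF : ∀ s : ℝ, HasDerivAt F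
      (((∑ i, deriv (V i) s) + ρ * W s) * Real.exp (ρ * s)) s := by
    intro s
    have he : HasDerivAt (fun u : ℝ => Real.exp (ρ * u)) (Real.exp (ρ * s) * ρ) s := by
      have := ((hasDerivAt_id s).const_mul ρ).exp
      simpa using this
    have := (hW s).mul he
    exact this.congr_deriv (by ring)
  have hmono : AntitoneOn F (Set.Ici (0:ℝ)) := by
    apply antitoneOn_of_deriv_nonpos (convex_Ici 0)
    · exact (Continuous.mul (continuous_finset_sum _ fun i _ => (hVdiff i).continuous) (by fun_prop)).continuousOn
    · intro s hs
      exact (hF s).differentiableAt.differentiableWithinAt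
    · intro s hs
      rw [interior_Ici] at hs
      rw [(hF s).deriv]
      exact mul_nonpos_of_nonpos_of_nonneg (hdW s (le_of_lt hs)) (Real.exp_pos _).le
  have hFle : F t ≤ F 0 := hmono Set.self_mem_Ici ht ht
  have h0 : F 0 = W 0 := by simp [hFdef]
  have hexp : Real.exp (ρ * t) > 0 := Real.exp_pos _
  have : W t * Real.exp (ρ * t) ≤ W 0 := by rw [← h0]; exact hFle
  have hfin : W t ≤ W 0 * Real.exp (-ρ * t) := by
    rw [neg_mul, Real.exp_neg, ← div_eq_mul_inv, le_div_iff₀ hexp]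
    exact this
  simpa [hWdef] using hfin
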